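/- arXiv:math/0505020 — 2 statements merged into one kernel-verified Lean document; each statement's English description precedes it below -/
import Mathlib

section
/- For every positive integer n, the maximum of the down degree over S_n equals ⌊n²/4⌋; in particular the permutation π = [⌊n/2⌋+1, ⌊n/2⌋+2, ..., n, 1, 2, ..., ⌊n/2⌋] satisfies d_−(π) = ⌊n²/4⌋. -/
open Equiv Finset

/-- Number of inversions (Coxeter length) of a permutation of `Fin n`. -/
def invNum {n : ℕ} (π : Equiv.Perm (Fin n)) : ℕ :=
  (Finset.univ.filter (fun p : Fin n × Fin n => p.1 < p.2 ∧ π p.2 < π p.1)).card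

/-- Down degree: number of transpositions `t_{a,b}` with `ℓ(t_{a,b} π) = ℓ(π) - 1`. -/
def downDeg {n : ℕ} (π : Equiv.Perm (Fin n)) : ℕ :=
  (Finset.univ.filter (fun p : Fin n × Fin n =>
    p.1 < p.2 ∧ invNum (Equiv.swap p.1 p.2 * π) + 1 = invNum π)).card

/-- Total degree: number of transpositions `t_{a,b}` with `ℓ(t_{a,b} π) = ℓ(π) ± 1`. -/
def totalDeg {n : ℕ} (π : Equiv.Perm (Fin n)) : ℕ :=
  (Finset.univ.filter (fun p : Fin n × Fin n =>
    p.1 < p.2 ∧ (invNum (Equiv.swap p.1 p.2 * π) + 1 = invNum π ∨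
      invNum (Equiv.swap p.1 p.2 * π) = invNum π + 1))).card


def Dnum {n : ℕ} (f : Perm (Fin n)) : ℕ :=
  (Finset.univ.filter (fun p : Fin n × Fin n => p.1 < p.2 ∧ f p.2 < f p.1)).card

theorem Dnum_inv {n : ℕ} (π : Perm (Fin n)) : Dnum π = Dnum π⁻¹ := by
  unfold Dnum
  apply Finset.card_bij' (fun p _ => (π p.2, π p.1)) (fun q _ => (π⁻¹ q.2, π⁻¹ q.1))
  · intro p hp
    simp only [mem_filter, mem_univ, true_and] at hp ⊢
    simpa using hp.symm
  · intro q hq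
    simp only [mem_filter, mem_univ, true_and] at hq ⊢
    simpa using hq.symm
  · intro p _; simp
  · intro q _; simp

def iota {n : ℕ} (f : Perm (Fin n)) (a b : Fin n) (p : Fin n × Fin n) : Fin n × Fin n :=
  if p.2 = a ∧ f p.1 < f b then (p.1, b)
  else if p.1 = b ∧ f a < f p.2 then (a, p.2) else p

theorem iota_maps {n : ℕ} (f : Perm (Fin n)) (a b : Fin n) (hab : a < b) (hf : f a < f b)
    (p : Fin n × Fin n) (hp : p.1 < p.2 ∧ f p.2 < f p.1) :
    (iota f a b p).1 < (iota f a b p).2 ∧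
      (f * swap a b) ((iota f a b p).2) < (f * swap a b) ((iota f a b p).1) := by
  obtain ⟨u, v⟩ := p
  obtain ⟨huv, hfvu⟩ := hp
  have huv : u < v := huv
  have hfvu : f v < f u := hfvu
  simp only [iota]
  split_ifs with h1 h2
  · -- v = a, f u < f b : output (u, b)
    obtain ⟨hva, hub⟩ := h1
    have hua : u ≠ a := hva ▸ ne_of_lt huv
    have hab' : u ≠ b := ne_of_lt (lt_trans (hva ▸ huv) hab)
    refine ⟨lt_trans (hva ▸ huv) hab, ?_⟩
    show f (swap a b b) < f (swap a b u)
    rw [swap_apply_right, swap_apply_of_ne_of_ne hua hab']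
    exact hva ▸ hfvu
  · -- u = b, f a < f v : output (a, v)
    obtain ⟨hub, hav⟩ := h2
    have hva : v ≠ a := ne_of_gt (lt_trans hab (hub ▸ huv))
    have hvb : v ≠ b := ne_of_gt (hub ▸ huv)
    refine ⟨lt_trans hab (hub ▸ huv), ?_⟩
    show f (swap a b v) < f (swap a b a)
    rw [swap_apply_left, swap_apply_of_ne_of_ne hva hvb]
    exact hub ▸ hfvu
  · refine ⟨huv, ?_⟩
    show f (swap a b v) < f (swap a b u)
    by_cases hva : v = a
    · have hub : ¬ f u < f b := fun h => h1 ⟨hva, h⟩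
      have hune : u ≠ b := ne_of_lt (lt_trans huv (hva ▸ hab))
      have hbu : f b < f u :=
        lt_of_le_of_ne (not_lt.mp hub) (fun h => hune (f.injective h.symm))
      have hua : u ≠ a := hva ▸ ne_of_lt huv
      rw [hva, swap_apply_left, swap_apply_of_ne_of_ne hua hune]
      exact hbu
    · by_cases hvb : v = b
      · have hua : u ≠ a := by
          rintro rfl; exact absurd hf (not_lt.mpr (hvb ▸ hfvu).le)
        have hub : u ≠ b := hvb ▸ ne_of_lt huv
        rw [hvb, swap_apply_right, swap_apply_of_ne_of_ne hua hub]
        exact lt_trans hf (hvb ▸ hfvu)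
      · rw [swap_apply_of_ne_of_ne hva hvb]
        by_cases hua : u = a
        · rw [hua, swap_apply_left]
          exact lt_trans (hua ▸ hfvu) hf
        · by_cases hub : u = b
          · have hvna : f v < f a := by
              have h' : ¬ f a < f v := fun h => h2 ⟨hub, h⟩
              exact lt_of_le_of_ne (not_lt.mp h') (fun h => hva (f.injective h))
            rw [hub, swap_apply_right]
            exact hvna
          · rw [swap_apply_of_ne_of_ne hua hub]
            exact hfvu

theorem iota_inj {n : ℕ} (f : Perm (Fin n)) (a b : Fin n) (hab : a < b) (hf : f a < f b)
    (p q : Fin n × Fin n) (hp : p.1 < p.2 ∧ f p.2 < f p.1) (hq : q.1 < q.2 ∧ f q.2 < f q.1)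
    (hpq : iota f a b p = iota f a b q) : p = q := by
  obtain ⟨u, v⟩ := p; obtain ⟨x, y⟩ := q
  obtain ⟨huv, hfvu⟩ := hp; obtain ⟨hxy, hfyx⟩ := hq
  have huv : u < v := huv
  have hfvu : f v < f u := hfvu
  have hxy : x < y := hxy
  have hfyx : f y < f x := hfyx
  simp only [iota] at hpq
  split_ifs at hpq with h1 h2 h3 h4 h5 h6 h7 h8
  all_goals rw [Prod.mk.injEq] at hpq
  · -- (1,1)
    obtain ⟨e1, -⟩ := hpq
    obtain ⟨e2, -⟩ := h1; obtain ⟨e3, -⟩ := h2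
    subst e1; subst e2; subst e3; rfl
  · -- (1,2) hpq : (u,b)=(a,y), h1 : c1
    obtain ⟨e1, -⟩ := hpq
    obtain ⟨e2, -⟩ := h1
    subst e2
    rw [e1] at huv
    exact absurd huv (not_lt.mpr huv.le)
  · -- (1,3) hpq : (u,b) = (x,y)
    obtain ⟨e1, e2⟩ := hpq
    subst e1; rw [← e2] at hfyx
    exact absurd (lt_trans h1.2 hfyx) (lt_irrefl _)
  · -- (2,1) hpq : (a,v) = (x,b), h5 : c3 (y = a ..)
    obtain ⟨e1, -⟩ := hpq
    obtain ⟨e2, -⟩ := h5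
    subst e2
    rw [← e1] at hxy
    exact absurd hxy (not_lt.mpr hxy.le)
  · -- (2,2) hpq : (a,v) = (a,y), h2 : c2 (u = b), h4 : c4 (x = b)
    obtain ⟨-, e1⟩ := hpq
    obtain ⟨e2, -⟩ := h4; obtain ⟨e3, -⟩ := h6
    subst e1; subst e2; subst e3; rfl
  · -- (2,3) hpq : (a,v) = (x,y)
    obtain ⟨e1, e2⟩ := hpq
    subst e2; rw [← e1] at hfyx
    exact absurd (lt_trans h4.2 hfyx) (lt_irrefl _)
  · -- (3,1) hpq : (u,v) = (x,b), h3 : c3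
    obtain ⟨e1, e2⟩ := hpq
    subst e1; rw [e2] at hfvu
    exact absurd (lt_trans h7.2 hfvu) (lt_irrefl _)
  · -- (3,2) hpq : (u,v) = (a,y), h4 : c4
    obtain ⟨e1, e2⟩ := hpq
    subst e2; rw [e1] at hfvu
    exact absurd (lt_trans h8.2 hfvu) (lt_irrefl _)
  · exact Prod.ext hpq.1 hpq.2

theorem L1 {n : ℕ} (f : Perm (Fin n)) (a b : Fin n) (hab : a < b) (hf : f a < f b) :
    Dnum f ≤ Dnum (f * swap a b) := by
  apply Finset.card_le_card_of_injOn (iota f a b)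
  · intro p hp
    simp only [Finset.mem_coe, mem_filter, mem_univ, true_and] at hp ⊢
    exact iota_maps f a b hab hf p hp
  · intro p hp q hq hpq
    simp only [coe_filter, Set.mem_setOf_eq, mem_univ, true_and] at hp hq
    exact iota_inj f a b hab hf p q hp hq hpq

theorem iota_avoid {n : ℕ} (f : Perm (Fin n)) (a b w : Fin n) (hab : a < b) (hf : f a < f b)
    (haw : a < w) (hwb : w < b) (hfaw : f a < f w) (hfwb : f w < f b)
    (p : Fin n × Fin n) (hp : p.1 < p.2 ∧ f p.2 < f p.1) :
    iota f a b p ≠ (a, b) ∧ iota f a b p ≠ (a, w) := by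
  obtain ⟨u, v⟩ := p
  obtain ⟨huv, hfvu⟩ := hp
  have huv : u < v := huv
  have hfvu : f v < f u := hfvu
  simp only [iota]
  split_ifs with h1 h2
  · constructor
    · intro h
      rw [Prod.mk.injEq] at h
      rw [h.1] at huv
      rw [h1.1] at huv
      exact absurd huv (lt_irrefl a)
    · intro h
      rw [Prod.mk.injEq] at h
      exact absurd h.2 (ne_of_gt hwb)
  · constructor
    · intro h
      rw [Prod.mk.injEq] at h
      rw [h2.1, h.2] at huv
      exact absurd huv (lt_irrefl b)
    · intro h
      rw [Prod.mk.injEq] at h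
      rw [h2.1, h.2] at huv
      exact absurd (huv.trans hwb) (lt_irrefl b)
  · constructor
    · intro h
      rw [Prod.mk.injEq] at h
      rw [h.1, h.2] at hfvu
      exact absurd (hfvu.trans hf) (lt_irrefl _)
    · intro h
      rw [Prod.mk.injEq] at h
      rw [h.1, h.2] at hfvu
      exact absurd (hfvu.trans hfaw) (lt_irrefl _)

theorem iota_ne_ab {n : ℕ} (f : Perm (Fin n)) (a b : Fin n) (hf : f a < f b)
    (p : Fin n × Fin n) (hp : p.1 < p.2 ∧ f p.2 < f p.1) :
    iota f a b p ≠ (a, b) := by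
  obtain ⟨u, v⟩ := p
  obtain ⟨huv, hfvu⟩ := hp
  have huv : u < v := huv
  have hfvu : f v < f u := hfvu
  simp only [iota]
  split_ifs with h1 h2
  · intro h
    rw [Prod.mk.injEq] at h
    rw [h.1] at huv; rw [h1.1] at huv
    exact absurd huv (lt_irrefl a)
  · intro h
    rw [Prod.mk.injEq] at h
    rw [h2.1, h.2] at huv
    exact absurd huv (lt_irrefl b)
  · intro h
    rw [Prod.mk.injEq] at h
    rw [h.1, h.2] at hfvu
    exact absurd (hfvu.trans hf) (lt_irrefl _)

theorem iota_fix_ab {n : ℕ} (f : Perm (Fin n)) (a b : Fin n) (hab : a < b) :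
    iota f a b (a, b) = (a, b) := by
  simp only [iota]
  rw [if_neg, if_neg]
  · simp only [not_and]
    intro h; exact absurd h (ne_of_lt hab)
  · simp only [not_and]
    intro h; exact absurd h (ne_of_gt hab)

theorem iota_fix_aw {n : ℕ} (f : Perm (Fin n)) (a b w : Fin n) (hab : a < b) (haw : a < w) :
    iota f a b (a, w) = (a, w) := by
  simp only [iota]
  rw [if_neg, if_neg]
  · simp only [not_and]
    intro h; exact absurd h (ne_of_lt hab)
  · simp only [not_and]
    intro h; exact absurd h (ne_of_gt haw)

theorem mem_ab {n : ℕ} (f : Perm (Fin n)) (a b : Fin n) (hab : a < b) (hf : f a < f b) :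
    (a, b).1 < (a, b).2 ∧ (f * swap a b) ((a, b).2) < (f * swap a b) ((a, b).1) := by
  refine ⟨hab, ?_⟩
  show f (swap a b b) < f (swap a b a)
  rw [swap_apply_left, swap_apply_right]
  exact hf

theorem mem_aw {n : ℕ} (f : Perm (Fin n)) (a b w : Fin n) (hab : a < b) (haw : a < w)
    (hwb : w < b) (hfwb : f w < f b) :
    (a, w).1 < (a, w).2 ∧ (f * swap a b) ((a, w).2) < (f * swap a b) ((a, w).1) := by
  refine ⟨haw, ?_⟩
  show f (swap a b w) < f (swap a b a)
  rw [swap_apply_left, swap_apply_of_ne_of_ne (ne_of_gt haw) (ne_of_lt hwb)]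
  exact hfwb

theorem L_ge {n : ℕ} (f : Perm (Fin n)) (a b : Fin n) (hab : a < b) (hf : f a < f b) :
    Dnum f + 1 ≤ Dnum (f * swap a b) := by
  classical
  set s := (Finset.univ.filter (fun p : Fin n × Fin n => p.1 < p.2 ∧ f p.2 < f p.1)) ∪ {(a, b)}
    with hs
  have hcard : s.card = Dnum f + 1 := by
    rw [hs, Finset.card_union_of_disjoint, Finset.card_singleton]
    · rfl
    · rw [Finset.disjoint_singleton_right, mem_filter]
      rintro ⟨-, -, h⟩
      exact absurd (h.trans hf) (lt_irrefl _)
  rw [← hcard]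
  apply Finset.card_le_card_of_injOn (iota f a b)
  · intro p hp
    simp only [hs, Finset.mem_coe, Finset.mem_union, mem_filter, mem_univ, true_and,
      Finset.mem_singleton] at hp
    simp only [Finset.mem_coe, mem_filter, mem_univ, true_and]
    rcases hp with hp | rfl
    · exact iota_maps f a b hab hf p hp
    · rw [iota_fix_ab f a b hab]
      exact mem_ab f a b hab hf
  · intro p hp q hq hpq
    simp only [hs, Finset.coe_union, Set.mem_union, coe_filter, Set.mem_setOf_eq, mem_univ,
      true_and, Finset.coe_singleton, Set.mem_singleton_iff] at hp hq
    rcases hp with hp | rfl <;> rcases hq with hq | rfl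
    · exact iota_inj f a b hab hf p q hp hq hpq
    · rw [iota_fix_ab f a b hab] at hpq
      exact absurd hpq (iota_ne_ab f a b hf p hp)
    · rw [iota_fix_ab f a b hab] at hpq
      exact absurd hpq.symm (iota_ne_ab f a b hf q hq)
    · rfl

theorem L2 {n : ℕ} (f : Perm (Fin n)) (a b w : Fin n) (hab : a < b) (hf : f a < f b)
    (haw : a < w) (hwb : w < b) (hfaw : f a < f w) (hfwb : f w < f b) :
    Dnum f + 2 ≤ Dnum (f * swap a b) := by
  classical
  have hne : ((a, b) : Fin n × Fin n) ≠ (a, w) := by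
    intro h
    rw [Prod.mk.injEq] at h
    exact absurd h.2 (ne_of_gt hwb)
  set s := (Finset.univ.filter (fun p : Fin n × Fin n => p.1 < p.2 ∧ f p.2 < f p.1)) ∪
    {(a, b), (a, w)} with hs
  have hcard : s.card = Dnum f + 2 := by
    rw [hs, Finset.card_union_of_disjoint, Finset.card_pair hne]
    · rfl
    · rw [Finset.disjoint_insert_right, Finset.disjoint_singleton_right, mem_filter, mem_filter]
      constructor
      · rintro ⟨-, -, h⟩
        exact absurd (h.trans hf) (lt_irrefl _)
      · rintro ⟨-, -, h⟩
        exact absurd (h.trans hfaw) (lt_irrefl _)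
  rw [← hcard]
  apply Finset.card_le_card_of_injOn (iota f a b)
  · intro p hp
    simp only [hs, Finset.mem_coe, Finset.mem_union, mem_filter, mem_univ, true_and, Finset.mem_insert,
      Finset.mem_singleton] at hp
    simp only [Finset.mem_coe, mem_filter, mem_univ, true_and]
    rcases hp with hp | rfl | rfl
    · exact iota_maps f a b hab hf p hp
    · rw [iota_fix_ab f a b hab]
      exact mem_ab f a b hab hf
    · rw [iota_fix_aw f a b w hab haw]
      exact mem_aw f a b w hab haw hwb hfwb
  · intro p hp q hq hpq
    simp only [hs, Finset.coe_union, Set.mem_union, coe_filter, Set.mem_setOf_eq, mem_univ,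
      true_and, Finset.coe_insert, Set.mem_insert_iff, Finset.coe_singleton,
      Set.mem_singleton_iff] at hp hq
    rcases hp with hp | rfl | rfl <;> rcases hq with hq | rfl | rfl
    · exact iota_inj f a b hab hf p q hp hq hpq
    · rw [iota_fix_ab f a b hab] at hpq
      exact absurd hpq (iota_ne_ab f a b hf p hp)
    · rw [iota_fix_aw f a b w hab haw] at hpq
      exact absurd hpq ((iota_avoid f a b w hab hf haw hwb hfaw hfwb p hp).2)
    · rw [iota_fix_ab f a b hab] at hpq
      exact absurd hpq.symm (iota_ne_ab f a b hf q hq)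
    · rfl
    · rw [iota_fix_ab f a b hab, iota_fix_aw f a b w hab haw] at hpq
      exact absurd hpq hne
    · rw [iota_fix_aw f a b w hab haw] at hpq
      exact absurd hpq.symm ((iota_avoid f a b w hab hf haw hwb hfaw hfwb q hq).2)
    · rw [iota_fix_ab f a b hab, iota_fix_aw f a b w hab haw] at hpq
      exact absurd hpq.symm hne
    · rfl

def kappa {n : ℕ} (f : Perm (Fin n)) (a b : Fin n) (q : Fin n × Fin n) : Fin n × Fin n :=
  if q.1 = a ∧ q.2 ≠ b ∧ f a < f q.2 then (b, q.2)
  else if q.2 = b ∧ q.1 ≠ a ∧ f q.1 < f b then (q.1, a) else q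

theorem kappa_maps {n : ℕ} (f : Perm (Fin n)) (a b : Fin n) (hab : a < b) (hf : f a < f b)
    (hmid : ∀ w : Fin n, a < w → w < b → ¬(f a < f w ∧ f w < f b))
    (q : Fin n × Fin n) (hq : q.1 < q.2 ∧ (f * swap a b) q.2 < (f * swap a b) q.1) :
    ((kappa f a b q).1 < (kappa f a b q).2 ∧ f ((kappa f a b q).2) < f ((kappa f a b q).1))
      ∨ kappa f a b q = (a, b) := by
  obtain ⟨u, v⟩ := q
  obtain ⟨huv, hg⟩ := hq
  have huv : u < v := huv
  have hg : f (swap a b v) < f (swap a b u) := hg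
  simp only [kappa]
  split_ifs with h1 h2
  · -- u = a, v ≠ b, f a < f v : output (b, v)
    left
    obtain ⟨hua, hvb, hav⟩ := h1
    have hva : v ≠ a := ne_of_gt (hua ▸ huv)
    rw [hua, swap_apply_left, swap_apply_of_ne_of_ne hva hvb] at hg
    -- hg : f v < f b
    have hbv : b < v := by
      rcases lt_trichotomy v b with h | h | h
      · exact absurd ⟨hav, hg⟩ (hmid v (hua ▸ huv) h)
      · exact absurd h hvb
      · exact h
    exact ⟨hbv, hg⟩
  · -- v = b, u ≠ a, f u < f b : output (u, a)
    left
    obtain ⟨hvb, hua, hub'⟩ := h2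
    have hub : u ≠ b := ne_of_lt (hvb ▸ huv)
    rw [hvb, swap_apply_right, swap_apply_of_ne_of_ne hua hub] at hg
    -- hg : f a < f u
    have hua' : u < a := by
      rcases lt_trichotomy u a with h | h | h
      · exact h
      · exact absurd h hua
      · exact absurd ⟨hg, hub'⟩ (hmid u h (hvb ▸ huv))
    exact ⟨hua', hg⟩
  · -- identity
    by_cases hua : u = a
    · by_cases hvb : v = b
      · right; rw [hua, hvb]
      · -- branch1 failed with u = a, v ≠ b: so ¬(f a < f v)
        left
        have hva : v ≠ a := ne_of_gt (hua ▸ huv)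
        rw [hua, swap_apply_left, swap_apply_of_ne_of_ne hva hvb] at hg
        have : ¬ f a < f v := fun h => h1 ⟨hua, hvb, h⟩
        have : f v < f a :=
          lt_of_le_of_ne (not_lt.mp this) (fun h => hva (f.injective h))
        exact ⟨huv, hua ▸ this⟩
    · by_cases hvb : v = b
      · left
        have hub : u ≠ b := ne_of_lt (hvb ▸ huv)
        rw [hvb, swap_apply_right, swap_apply_of_ne_of_ne hua hub] at hg
        have : ¬ f u < f b := fun h => h2 ⟨hvb, hua, h⟩
        have : f b < f u :=
          lt_of_le_of_ne (not_lt.mp this) (fun h => hub (f.injective h.symm))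
        exact ⟨huv, hvb ▸ this⟩
      · by_cases hva : v = a
        · left
          have hub : u ≠ b := ne_of_lt (lt_trans huv (hva ▸ hab))
          rw [hva, swap_apply_left, swap_apply_of_ne_of_ne hua hub] at hg
          exact ⟨huv, hva ▸ (hf.trans hg)⟩
        · by_cases hub : u = b
          · left
            have hva' : v ≠ a := fun h => hva h
            rw [hub, swap_apply_right, swap_apply_of_ne_of_ne hva hvb] at hg
            exact ⟨huv, hub ▸ (hg.trans hf)⟩
          · left
            rw [swap_apply_of_ne_of_ne hva hvb, swap_apply_of_ne_of_ne hua hub] at hg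
            exact ⟨huv, hg⟩

theorem kappa_inj {n : ℕ} (f : Perm (Fin n)) (a b : Fin n) (hab : a < b) (hf : f a < f b)
    (p q : Fin n × Fin n)
    (hp : p.1 < p.2 ∧ (f * swap a b) p.2 < (f * swap a b) p.1)
    (hq : q.1 < q.2 ∧ (f * swap a b) q.2 < (f * swap a b) q.1)
    (hpq : kappa f a b p = kappa f a b q) : p = q := by
  obtain ⟨u, v⟩ := p; obtain ⟨x, y⟩ := q
  obtain ⟨huv, hgp⟩ := hp; obtain ⟨hxy, hgq⟩ := hq
  have huv : u < v := huv
  have hgp : f (swap a b v) < f (swap a b u) := hgp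
  have hxy : x < y := hxy
  have hgq : f (swap a b y) < f (swap a b x) := hgq
  simp only [kappa] at hpq
  split_ifs at hpq with h1 h2 h3 h4 h5 h6 h7 h8
  all_goals rw [Prod.mk.injEq] at hpq
  · -- (b,v)=(b,y)
    exact Prod.ext (h1.1.trans h2.1.symm) hpq.2
  · -- (b,v)=(x,a): v = a, but v > u = a
    obtain ⟨-, e⟩ := hpq
    rw [e, ← h1.1] at huv
    exact absurd huv (lt_irrefl _)
  · -- (b,v)=(x,y) id : x = b, y = v; q g-inv: f v < f a; h1: f a < f v
    obtain ⟨e1, e2⟩ := hpq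
    obtain ⟨hua, hvb, hav⟩ := h1
    rw [← e1, ← e2, swap_apply_right,
      swap_apply_of_ne_of_ne (ne_of_gt (hua ▸ huv)) hvb] at hgq
    exact absurd (hav.trans hgq) (lt_irrefl _)
  · -- (u,a)=(b,y): u = b but u < v = b
    obtain ⟨e, -⟩ := hpq
    rw [e, ← h4.1] at huv
    exact absurd huv (lt_irrefl _)
  · -- (u,a)=(x,a)
    exact Prod.ext hpq.1 (h4.1.trans h6.1.symm)
  · -- (u,a)=(x,y) id: x = u, y = a; q g-inv: f b < f u; h4: f u < f b
    obtain ⟨e1, e2⟩ := hpq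
    obtain ⟨hvb, hua, hub'⟩ := h4
    rw [← e1, ← e2, swap_apply_left,
      swap_apply_of_ne_of_ne hua (ne_of_lt (hvb ▸ huv))] at hgq
    exact absurd (hub'.trans hgq) (lt_irrefl _)
  · -- id p = (b,y): u = b, v = y; p g-inv: f v < f a; h7 : f a < f y = f v
    obtain ⟨e1, e2⟩ := hpq
    obtain ⟨hxa, hyb, hay⟩ := h7
    rw [e1, e2] at hgp huv
    rw [swap_apply_right, swap_apply_of_ne_of_ne (ne_of_gt (hxa ▸ hxy)) hyb] at hgp
    exact absurd (hay.trans hgp) (lt_irrefl _)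
  · -- id p = (x,a): u = x, v = a; p g-inv: f b < f x; h8: f x < f b
    obtain ⟨e1, e2⟩ := hpq
    obtain ⟨hyb, hxa, hxb'⟩ := h8
    rw [e1, e2] at hgp huv
    rw [swap_apply_left, swap_apply_of_ne_of_ne hxa (ne_of_lt (hyb ▸ hxy))] at hgp
    exact absurd (hxb'.trans hgp) (lt_irrefl _)
  · exact Prod.ext hpq.1 hpq.2

theorem L3 {n : ℕ} (f : Perm (Fin n)) (a b : Fin n) (hab : a < b) (hf : f a < f b)
    (hmid : ∀ w : Fin n, a < w → w < b → ¬(f a < f w ∧ f w < f b)) :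
    Dnum (f * swap a b) = Dnum f + 1 := by
  classical
  refine le_antisymm ?_ (L_ge f a b hab hf)
  set s := (Finset.univ.filter (fun p : Fin n × Fin n => p.1 < p.2 ∧ f p.2 < f p.1)) ∪ {(a, b)}
    with hs
  have hcard : s.card = Dnum f + 1 := by
    rw [hs, Finset.card_union_of_disjoint, Finset.card_singleton]
    · rfl
    · rw [Finset.disjoint_singleton_right, mem_filter]
      rintro ⟨-, -, h⟩
      exact absurd (h.trans hf) (lt_irrefl _)
  rw [← hcard]
  apply Finset.card_le_card_of_injOn (kappa f a b)
  · intro q hq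
    simp only [Finset.mem_coe, mem_filter, mem_univ, true_and] at hq
    simp only [hs, Finset.mem_coe, Finset.mem_union, mem_filter, mem_univ, true_and, Finset.mem_singleton]
    exact kappa_maps f a b hab hf hmid q hq
  · intro p hp q hq hpq
    simp only [coe_filter, Set.mem_setOf_eq, mem_univ, true_and] at hp hq
    exact kappa_inj f a b hab hf p q hp hq hpq

theorem mantel_aux {n : ℕ} (R : Fin n → Fin n → Prop) [DecidableRel R]
    (hsymm : ∀ a b, R a b → R b a)
    (htri : ∀ a b c, a < b → b < c → R a b → R b c → R a c → False) :
    ∀ s : Finset (Fin n),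
      ((s ×ˢ s).filter fun p : Fin n × Fin n => p.1 < p.2 ∧ R p.1 p.2).card ≤ s.card ^ 2 / 4 := by
  intro s
  induction s using Finset.strongInduction with
  | _ s ih =>
    set E := (s ×ˢ s).filter fun p : Fin n × Fin n => p.1 < p.2 ∧ R p.1 p.2 with hE
    rcases eq_or_ne E ∅ with h0 | h0
    · rw [h0]; simp
    obtain ⟨⟨x, y⟩, hxyE⟩ := Finset.nonempty_iff_ne_empty.mpr h0
    rw [hE, Finset.mem_filter, Finset.mem_product] at hxyE
    obtain ⟨⟨hxs, hys⟩, hxy, hRxy⟩ := hxyE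
    have hxyne : x ≠ y := ne_of_lt hxy
    set s' := s \ {x, y} with hs'
    have hsub : s' ⊂ s := by
      refine Finset.ssubset_iff_of_subset (Finset.sdiff_subset) |>.mpr ?_
      exact ⟨x, hxs, by simp [hs']⟩
    have hpair : ({x, y} : Finset (Fin n)) ⊆ s := by
      intro z hz; simp only [Finset.mem_insert, Finset.mem_singleton] at hz
      rcases hz with rfl | rfl <;> assumption
    have hcard2 : 2 ≤ s.card := by
      calc 2 = ({x, y} : Finset (Fin n)).card := (Finset.card_pair hxyne).symm
        _ ≤ s.card := Finset.card_le_card hpair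
    have hcards' : s'.card = s.card - 2 := by
      rw [hs', Finset.card_sdiff_of_subset hpair, Finset.card_pair hxyne]
    -- split E
    set T := E.filter (fun p : Fin n × Fin n => p.1 = x ∨ p.1 = y ∨ p.2 = x ∨ p.2 = y) with hT
    set E' := (s' ×ˢ s').filter fun p : Fin n × Fin n => p.1 < p.2 ∧ R p.1 p.2 with hE'
    have hsplit : E ⊆ E' ∪ T := by
      intro p hp
      by_cases ht : p.1 = x ∨ p.1 = y ∨ p.2 = x ∨ p.2 = y
      · exact Finset.mem_union_right _ (Finset.mem_filter.mpr ⟨hp, ht⟩)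
      · push_neg at ht
        apply Finset.mem_union_left
        rw [hE, Finset.mem_filter, Finset.mem_product] at hp
        rw [hE', Finset.mem_filter, Finset.mem_product]
        refine ⟨⟨?_, ?_⟩, hp.2⟩
        · rw [hs', Finset.mem_sdiff]; exact ⟨hp.1.1, by simp [ht.1, ht.2.1]⟩
        · rw [hs', Finset.mem_sdiff]; exact ⟨hp.1.2, by simp [ht.2.2.1, ht.2.2.2]⟩
    -- every pair in T \ {(x,y)} has exactly one endpoint in {x,y}; map it to the other one
    have hTcard : T.card ≤ s.card - 1 := by
      have hmap : ∀ p ∈ T, (if p.1 = x ∨ p.1 = y then p.2 else p.1) ∈ s' ∪ {y} := by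
        intro p hp
        rw [hT, Finset.mem_filter] at hp
        obtain ⟨hpE, hor⟩ := hp
        rw [hE, Finset.mem_filter, Finset.mem_product] at hpE
        obtain ⟨⟨h1s, h2s⟩, hlt, hR⟩ := hpE
        by_cases hh : p.1 = x ∨ p.1 = y
        · rw [if_pos hh]
          by_cases h2 : p.2 = x ∨ p.2 = y
          · -- then p = (x,y)
            rcases hh with e1 | e1 <;> rcases h2 with e2 | e2
            · rw [e1, e2] at hlt; exact absurd hlt (lt_irrefl _)
            · simp [e2]
            · rw [e1, e2] at hlt; exact absurd (hxy.trans hlt) (lt_irrefl _)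
            · rw [e1, e2] at hlt; exact absurd hlt (lt_irrefl _)
          · push_neg at h2
            apply Finset.mem_union_left
            rw [hs', Finset.mem_sdiff]
            exact ⟨h2s, by simp [h2.1, h2.2]⟩
        · push_neg at hh
          rw [if_neg (by push_neg; exact hh)]
          apply Finset.mem_union_left
          rw [hs', Finset.mem_sdiff]
          exact ⟨h1s, by simp [hh.1, hh.2]⟩
      have hinj : ∀ p ∈ T, ∀ q ∈ T,
          (if p.1 = x ∨ p.1 = y then p.2 else p.1) = (if q.1 = x ∨ q.1 = y then q.2 else q.1) →
          p = q := by
        intro p hp q hq heq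
        rw [hT, Finset.mem_filter] at hp hq
        obtain ⟨hpE, hpor⟩ := hp
        obtain ⟨hqE, hqor⟩ := hq
        rw [hE, Finset.mem_filter, Finset.mem_product] at hpE hqE
        obtain ⟨⟨hp1s, hp2s⟩, hplt, hpR⟩ := hpE
        obtain ⟨⟨hq1s, hq2s⟩, hqlt, hqR⟩ := hqE
        -- endpoint in {x,y} for p : ep, other : zp
        -- we do a big case analysis
        by_cases hh : p.1 = x ∨ p.1 = y <;> by_cases hh' : q.1 = x ∨ q.1 = y
        · rw [if_pos hh, if_pos hh'] at heq
          -- p = (ep, z), q = (eq, z) with z = p.2 = q.2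
          rcases hh with e1 | e1 <;> rcases hh' with e2 | e2
          · exact Prod.ext (e1.trans e2.symm) heq
          · -- p.1 = x, q.1 = y, common z := p.2 = q.2
            exfalso
            -- R x z, R y z, R x y, z ∉ {x,y}? z > y > x since q.1 = y < q.2 = z
            have hyz : y < p.2 := e2 ▸ (heq ▸ hqlt)
            have hxz : x < p.2 := hxy.trans hyz
            exact htri x y p.2 hxy hyz hRxy (heq ▸ (e2 ▸ hqR)) (e1 ▸ hpR)
          · exfalso
            have hyz : y < q.2 := e1 ▸ (heq ▸ hplt)
            have hxz : x < q.2 := hxy.trans hyz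
            exact htri x y q.2 hxy hyz hRxy (e1 ▸ (heq ▸ hpR)) (e2 ▸ hqR)
          · exact Prod.ext (e1.trans e2.symm) heq
        · rw [if_pos hh, if_neg hh'] at heq
          -- q.1 ∉ {x,y} so q.2 ∈ {x,y}; z = p.2 = q.1
          push_neg at hh'
          have hq2 : q.2 = x ∨ q.2 = y := by
            rcases hqor with h | h | h | h
            · exact absurd h hh'.1
            · exact absurd h hh'.2
            · exact Or.inl h
            · exact Or.inr h
          rcases hh with e1 | e1 <;> rcases hq2 with e2 | e2
          · -- p = (x, z), q = (z, x): z > x and z < x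
            exfalso
            rw [← heq] at hqlt
            rw [e1] at hplt
            rw [e2] at hqlt
            exact absurd (hplt.trans hqlt) (lt_irrefl _)
          · -- p = (x, z), q = (z, y): R x z, R z y, R x y : triangle x < z < y? z vs x,y
            exfalso
            rw [← heq] at hqlt hqR
            rw [e2] at hqlt hqR
            rw [e1] at hplt hpR
            -- hplt : x < p.2, hqlt : p.2 < y, hpR : R x p.2, hqR : R p.2 y
            exact htri x p.2 y hplt hqlt hpR hqR hRxy
          · -- p = (y, z), q = (z, x): y < z < x contradiction with x < y
            exfalso
            rw [← heq] at hqlt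
            rw [e2] at hqlt
            rw [e1] at hplt
            exact absurd ((hxy.trans hplt).trans hqlt) (lt_irrefl _)
          · -- p = (y, z), q = (z, y)
            exfalso
            rw [← heq] at hqlt
            rw [e2] at hqlt
            rw [e1] at hplt
            exact absurd (hplt.trans hqlt) (lt_irrefl _)
        · rw [if_neg hh, if_pos hh'] at heq
          push_neg at hh
          have hp2 : p.2 = x ∨ p.2 = y := by
            rcases hpor with h | h | h | h
            · exact absurd h hh.1
            · exact absurd h hh.2
            · exact Or.inl h
            · exact Or.inr h
          rcases hh' with e1 | e1 <;> rcases hp2 with e2 | e2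
          · exfalso
            rw [heq] at hplt
            rw [e1] at hqlt
            rw [e2] at hplt
            exact absurd (hqlt.trans hplt) (lt_irrefl _)
          · exfalso
            rw [heq] at hplt hpR
            rw [e2] at hplt hpR
            rw [e1] at hqlt hqR
            exact htri x q.2 y hqlt hplt hqR hpR hRxy
          · exfalso
            rw [heq] at hplt
            rw [e2] at hplt
            rw [e1] at hqlt
            exact absurd ((hxy.trans hqlt).trans hplt) (lt_irrefl _)
          · exfalso
            rw [heq] at hplt
            rw [e2] at hplt
            rw [e1] at hqlt
            exact absurd (hqlt.trans hplt) (lt_irrefl _)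
        · rw [if_neg hh, if_neg hh'] at heq
          push_neg at hh hh'
          have hp2 : p.2 = x ∨ p.2 = y := by
            rcases hpor with h | h | h | h
            · exact absurd h hh.1
            · exact absurd h hh.2
            · exact Or.inl h
            · exact Or.inr h
          have hq2 : q.2 = x ∨ q.2 = y := by
            rcases hqor with h | h | h | h
            · exact absurd h hh'.1
            · exact absurd h hh'.2
            · exact Or.inl h
            · exact Or.inr h
          rcases hp2 with e2 | e2 <;> rcases hq2 with e3 | e3
          · exact Prod.ext heq (e2.trans e3.symm)
          · -- p = (z, x), q = (z, y): R z x, R z y, R x y: z < x < y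
            exfalso
            rw [heq] at hplt hpR
            rw [e2] at hplt hpR
            rw [e3] at hqlt hqR
            exact htri q.1 x y hplt hxy hpR hRxy hqR
          · exfalso
            rw [heq] at hplt hpR
            rw [e2] at hplt hpR
            rw [e3] at hqlt hqR
            exact htri q.1 x y hqlt hxy hqR hRxy hpR
          · exact Prod.ext heq (e2.trans e3.symm)
      have hxnr : y ∉ s' := by simp [hs']
      have : T.card ≤ (s' ∪ {y}).card := Finset.card_le_card_of_injOn _ hmap
        (fun p hp q hq => hinj p hp q hq)
      calc T.card ≤ (s' ∪ {y}).card := this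
        _ = s'.card + 1 := by
            rw [Finset.union_comm]
            show (insert y s').card = s'.card + 1
            rw [Finset.card_insert_of_notMem hxnr]
        _ = s.card - 1 := by omega
    have hE'card : E'.card ≤ (s.card - 2) ^ 2 / 4 := by
      rw [← hcards']
      exact ih s' hsub
    have harith : (s.card - 2) ^ 2 / 4 + (s.card - 1) = s.card ^ 2 / 4 := by
      obtain ⟨j, hj⟩ : ∃ j, s.card = j + 2 := ⟨s.card - 2, by omega⟩
      rw [hj]
      have h1 : (j + 2) - 2 = j := by omega
      have h2 : (j + 2) ^ 2 = j ^ 2 + (j + 1) * 4 := by ring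
      rw [h1, h2, Nat.add_mul_div_right _ _ (by norm_num : (0:ℕ) < 4)]
      omega
    calc E.card ≤ (E' ∪ T).card := Finset.card_le_card hsplit
      _ ≤ E'.card + T.card := Finset.card_union_le _ _
      _ ≤ (s.card - 2) ^ 2 / 4 + (s.card - 1) := by
          exact Nat.add_le_add hE'card hTcard
      _ = s.card ^ 2 / 4 := harith

theorem invNum_eq_Dnum {n : ℕ} (σ : Perm (Fin n)) : invNum σ = Dnum σ⁻¹ := by
  rw [show invNum σ = Dnum σ from rfl, Dnum_inv]

theorem invNum_swap_mul {n : ℕ} (σ : Perm (Fin n)) (a b : Fin n) :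
    invNum (swap a b * σ) = Dnum (σ⁻¹ * swap a b) := by
  rw [show invNum (swap a b * σ) = Dnum (swap a b * σ) from rfl, Dnum_inv, mul_inv_rev, swap_inv]

theorem edge_inv {n : ℕ} (σ : Perm (Fin n)) (a b : Fin n) (hab : a < b)
    (hedge : invNum (swap a b * σ) + 1 = invNum σ) : σ⁻¹ b < σ⁻¹ a := by
  rcases lt_trichotomy (σ⁻¹ a) (σ⁻¹ b) with h | h | h
  · exfalso
    have := L1 σ⁻¹ a b hab h
    rw [← invNum_swap_mul, ← invNum_eq_Dnum] at this
    omega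
  · exact absurd (σ⁻¹.injective h) (ne_of_lt hab)
  · exact h

theorem edge_tri {n : ℕ} (σ : Perm (Fin n)) (a b c : Fin n) (hab : a < b) (hbc : b < c)
    (e1 : invNum (swap a b * σ) + 1 = invNum σ)
    (e2 : invNum (swap b c * σ) + 1 = invNum σ)
    (e3 : invNum (swap a c * σ) + 1 = invNum σ) : False := by
  have hac : a < c := hab.trans hbc
  have i1 : σ⁻¹ b < σ⁻¹ a := edge_inv σ a b hab e1
  have i2 : σ⁻¹ c < σ⁻¹ b := edge_inv σ b c hbc e2
  set f' := σ⁻¹ * swap a c with hf'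
  have hfa : f' a = σ⁻¹ c := by
    rw [hf']; show σ⁻¹ (swap a c a) = σ⁻¹ c; rw [swap_apply_left]
  have hfc : f' c = σ⁻¹ a := by
    rw [hf']; show σ⁻¹ (swap a c c) = σ⁻¹ a; rw [swap_apply_right]
  have hfb : f' b = σ⁻¹ b := by
    rw [hf']; show σ⁻¹ (swap a c b) = σ⁻¹ b
    rw [swap_apply_of_ne_of_ne (ne_of_gt hab) (ne_of_lt hbc)]
  have hL2 := L2 f' a c b hac (by rw [hfa, hfc]; exact i2.trans i1) hab hbc
    (by rw [hfa, hfb]; exact i2) (by rw [hfb, hfc]; exact i1)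
  have hback : f' * swap a c = σ⁻¹ := by
    rw [hf', mul_assoc, swap_mul_self, mul_one]
  rw [hback, ← invNum_eq_Dnum] at hL2
  have h4 : Dnum f' = invNum (swap a c * σ) := (invNum_swap_mul σ a c).symm
  omega

theorem downDeg_le {n : ℕ} (σ : Perm (Fin n)) : downDeg σ ≤ n ^ 2 / 4 := by
  classical
  have key := mantel_aux (fun a b : Fin n => invNum (swap a b * σ) + 1 = invNum σ)
    (fun a b h => by show invNum (swap b a * σ) + 1 = invNum σ; rwa [swap_comm])
    (fun a b c h1 h2 e1 e2 e3 => edge_tri σ a b c h1 h2 e1 e2 e3)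
    Finset.univ
  rw [Finset.univ_product_univ, Finset.card_univ, Fintype.card_fin] at key
  exact key

theorem downDeg_rotation {n : ℕ} (hn : 0 < n) (π : Perm (Fin n))
    (hπ : ∀ i : Fin n, (π i : ℕ) = ((i : ℕ) + n / 2) % n) :
    downDeg π = n ^ 2 / 4 := by
  classical
  set m := n / 2 with hm
  have hmn : m ≤ n := Nat.div_le_self n 2
  set k := n - m with hk
  -- inverse formula
  have hinv : ∀ v : Fin n, (π⁻¹ v : ℕ) = ((v : ℕ) + k) % n := by
    intro v
    set i : Fin n := ⟨((v : ℕ) + k) % n, Nat.mod_lt _ hn⟩ with hi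
    have hπi : π i = v := by
      apply Fin.ext
      rw [hπ i]
      show ((((v : ℕ) + k) % n) + m) % n = (v : ℕ)
      rw [Nat.mod_add_mod]
      have he : (v : ℕ) + k + m = (v : ℕ) + n := by omega
      rw [he, Nat.add_mod_right, Nat.mod_eq_of_lt v.isLt]
    have h5 : π⁻¹ v = i := by rw [← hπi, Perm.inv_def, Equiv.symm_apply_apply]
    rw [h5]
  have hlow : ∀ v : Fin n, (v : ℕ) < m → (π⁻¹ v : ℕ) = (v : ℕ) + k := by
    intro v hv
    rw [hinv v]
    exact Nat.mod_eq_of_lt (by omega)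
  have hhigh : ∀ v : Fin n, m ≤ (v : ℕ) → (π⁻¹ v : ℕ) = (v : ℕ) - m := by
    intro v hv
    have hvn := v.isLt
    rw [hinv v]
    have h1 : (v : ℕ) + k = ((v : ℕ) - m) + n := by omega
    rw [h1, Nat.add_mod_right]
    exact Nat.mod_eq_of_lt (by omega)
  -- the edges are exactly the cross pairs
  have hiab : ∀ a b : Fin n, (a : ℕ) < m → m ≤ (b : ℕ) →
      invNum (swap a b * π) + 1 = invNum π := by
    intro a b ha hb
    have hab : a < b := by rw [Fin.lt_def]; omega
    set h := π⁻¹ * swap a b with hh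
    have hha : h a = π⁻¹ b := by
      rw [hh]; show π⁻¹ (swap a b a) = _; rw [swap_apply_left]
    have hhb : h b = π⁻¹ a := by
      rw [hh]; show π⁻¹ (swap a b b) = _; rw [swap_apply_right]
    have hbn := b.isLt
    have hfab : h a < h b := by
      rw [hha, hhb, Fin.lt_def, hlow a ha, hhigh b hb]
      omega
    have hmid : ∀ w : Fin n, a < w → w < b → ¬(h a < h w ∧ h w < h b) := by
      intro w haw hwb hcon
      have hwa : w ≠ a := ne_of_gt haw
      have hwbne : w ≠ b := ne_of_lt hwb
      have hhw : h w = π⁻¹ w := by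
        rw [hh]; show π⁻¹ (swap a b w) = _; rw [swap_apply_of_ne_of_ne hwa hwbne]
      rw [hha, hhb, hhw, Fin.lt_def, Fin.lt_def] at hcon
      have haw' : (a : ℕ) < (w : ℕ) := haw
      have hwb' : (w : ℕ) < (b : ℕ) := hwb
      rcases lt_or_ge ((w : ℕ)) m with hw | hw
      · rw [hlow w hw, hlow a ha] at hcon
        omega
      · rw [hhigh w hw, hhigh b hb, hlow a ha] at hcon
        omega
    have hL3 := L3 h a b hab hfab hmid
    have hback : h * swap a b = π⁻¹ := by rw [hh, mul_assoc, swap_mul_self, mul_one]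
    rw [hback, ← invNum_eq_Dnum] at hL3
    have h4 : Dnum h = invNum (swap a b * π) := (invNum_swap_mul π a b).symm
    omega
  have hnab : ∀ a b : Fin n, a < b → invNum (swap a b * π) + 1 = invNum π →
      (a : ℕ) < m ∧ m ≤ (b : ℕ) := by
    intro a b hab hedge
    have hi := edge_inv π a b hab hedge
    have hab' : (a : ℕ) < (b : ℕ) := hab
    have hbn := b.isLt
    have hi' : (π⁻¹ b : ℕ) < (π⁻¹ a : ℕ) := hi
    by_contra hcon
    push_neg at hcon
    rcases lt_or_ge ((a : ℕ)) m with ha | ha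
    · have hbm : (b : ℕ) < m := hcon ha
      rw [hlow a ha, hlow b hbm] at hi'
      omega
    · have hbm : m ≤ (b : ℕ) := le_trans ha hab'.le
      rw [hhigh a ha, hhigh b hbm] at hi'
      omega
  -- rewrite the filter
  have hfilter : (Finset.univ.filter (fun p : Fin n × Fin n =>
      p.1 < p.2 ∧ invNum (swap p.1 p.2 * π) + 1 = invNum π)) =
      Finset.univ.filter (fun p : Fin n × Fin n => (p.1 : ℕ) < m ∧ m ≤ (p.2 : ℕ)) := by
    apply Finset.filter_congr
    intro p _
    constructor
    · rintro ⟨h1, h2⟩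
      exact hnab p.1 p.2 h1 h2
    · rintro ⟨h1, h2⟩
      have hlt : p.1 < p.2 := by rw [Fin.lt_def]; omega
      exact ⟨hlt, hiab p.1 p.2 h1 h2⟩
  have hcard1 : (Finset.univ.filter (fun u : Fin n => (u : ℕ) < m)).card = m := by
    refine Eq.trans ?_ (Finset.card_range m)
    refine Finset.card_nbij' (fun u => (u : ℕ)) (fun j => (⟨j % n, Nat.mod_lt _ hn⟩ : Fin n))
      ?_ ?_ ?_ ?_
    · intro u hu
      simp only [Finset.mem_coe, mem_filter, mem_univ, true_and] at hu
      exact Finset.mem_range.mpr hu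
    · intro j hj
      have := Finset.mem_range.mp hj
      simp only [Finset.mem_coe, mem_filter, mem_univ, true_and]
      show j % n < m
      rw [Nat.mod_eq_of_lt (by omega)]
      omega
    · intro u _
      apply Fin.ext
      show ((u : ℕ) % n) = (u : ℕ)
      exact Nat.mod_eq_of_lt u.isLt
    · intro j hj
      have := Finset.mem_range.mp hj
      show j % n = j
      exact Nat.mod_eq_of_lt (by omega)
  have hcard2 : (Finset.univ.filter (fun u : Fin n => m ≤ (u : ℕ))).card = k := by
    refine Eq.trans ?_ (Finset.card_range k)
    refine Finset.card_nbij' (fun u => (u : ℕ) - m)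
      (fun j => (⟨(m + j) % n, Nat.mod_lt _ hn⟩ : Fin n)) ?_ ?_ ?_ ?_
    · intro u hu
      simp only [Finset.mem_coe, mem_filter, mem_univ, true_and] at hu
      have h2 := u.isLt
      refine Finset.mem_range.mpr ?_
      show (u : ℕ) - m < k
      omega
    · intro j hj
      have := Finset.mem_range.mp hj
      simp only [Finset.mem_coe, mem_filter, mem_univ, true_and]
      show m ≤ (m + j) % n
      rw [Nat.mod_eq_of_lt (by omega)]
      omega
    · intro u hu
      simp only [Finset.mem_coe, mem_filter, mem_univ, true_and] at hu
      have := u.isLt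
      apply Fin.ext
      show (m + ((u : ℕ) - m)) % n = (u : ℕ)
      rw [Nat.mod_eq_of_lt (by omega)]
      omega
    · intro j hj
      have := Finset.mem_range.mp hj
      show (m + j) % n - m = j
      rw [Nat.mod_eq_of_lt (by omega)]
      omega
  have hsplit2 : (Finset.univ.filter (fun p : Fin n × Fin n => (p.1 : ℕ) < m ∧ m ≤ (p.2 : ℕ))) =
      (Finset.univ.filter (fun u : Fin n => (u : ℕ) < m)) ×ˢ
        (Finset.univ.filter (fun u : Fin n => m ≤ (u : ℕ))) := by
    ext ⟨u, v⟩
    simp [Finset.mem_filter, Finset.mem_product]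
  have hcount : downDeg π = m * k := by
    show (Finset.univ.filter (fun p : Fin n × Fin n =>
      p.1 < p.2 ∧ invNum (swap p.1 p.2 * π) + 1 = invNum π)).card = m * k
    rw [hfilter, hsplit2, Finset.card_product, hcard1, hcard2]
  rw [hcount]
  -- arithmetic : (n/2) * (n - n/2) = n^2 / 4
  rcases Nat.even_or_odd n with ⟨q, hq⟩ | ⟨q, hq⟩
  · have h1 : m = q := by omega
    have h2 : k = q := by omega
    have h3 : n ^ 2 = q * q * 4 := by rw [hq]; ring
    rw [h1, h2, h3, Nat.mul_div_cancel _ (by norm_num)]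
  · have h1 : m = q := by omega
    have h2 : k = q + 1 := by omega
    have h3 : n ^ 2 = q * (q + 1) * 4 + 1 := by rw [hq]; ring
    rw [h1, h2, h3]
    set t := q * (q + 1)
    omega

/-- The maximum down degree on the symmetric group is n²/4 rounded down, attained at
the permutation [n/2+1, ..., n, 1, ..., n/2] (0-indexed: i ↦ (i + n/2) mod n). -/
theorem max_downDeg {n : ℕ} (hn : 0 < n) (π : Equiv.Perm (Fin n))
    (hπ : ∀ i : Fin n, (π i : ℕ) = ((i : ℕ) + n / 2) % n) :
    downDeg π = n ^ 2 / 4 ∧ ∀ σ : Equiv.Perm (Fin n), downDeg σ ≤ n ^ 2 / 4 := by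
  exact ⟨downDeg_rotation hn π hπ, fun σ => downDeg_le σ⟩
end

section
/- If π ∈ S_n has maximal down degree d_−(π) = ⌊n²/4⌋, then π has no decreasing subsequence of length 4. -/
open Equiv Finset

variable {n : ℕ}

lemma Equiv.Perm.apply_inv_self (f : Equiv.Perm (Fin n)) (x : Fin n) : f (f⁻¹ x) = x := by simp

lemma Equiv.Perm.inv_apply_self (f : Equiv.Perm (Fin n)) (x : Fin n) : f⁻¹ (f x) = x := by simp

def invSet (π : Equiv.Perm (Fin n)) : Finset (Fin n × Fin n) :=
  Finset.univ.filter (fun p : Fin n × Fin n => p.1 < p.2 ∧ π p.2 < π p.1)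

lemma invNum_eq (π : Equiv.Perm (Fin n)) : invNum π = (invSet π).card := rfl

lemma mem_invSet {π : Equiv.Perm (Fin n)} {p : Fin n × Fin n} :
    p ∈ invSet π ↔ p.1 < p.2 ∧ π p.2 < π p.1 := by simp [invSet]

def Fmap (i j : Fin n) (p : Fin n × Fin n) : Fin n × Fin n :=
  if Equiv.swap i j p.1 < Equiv.swap i j p.2 then (Equiv.swap i j p.1, Equiv.swap i j p.2) else p

lemma swap_mul_eq (f : Equiv.Perm (Fin n)) (a b : Fin n) :
    Equiv.swap (f a) (f b) * f = f * Equiv.swap a b := by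
  rw [Equiv.swap_apply_apply]; group

lemma Fmap_mem {π : Equiv.Perm (Fin n)} {i j : Fin n} (hij : i < j) (hv : π i < π j)
    {p : Fin n × Fin n} (hp : p ∈ invSet π) : Fmap i j p ∈ invSet (π * Equiv.swap i j) := by
  rw [mem_invSet] at hp
  obtain ⟨h12, hval⟩ := hp
  rw [Fmap]
  split_ifs with hs
  · rw [mem_invSet]
    refine ⟨hs, ?_⟩
    simpa [Equiv.Perm.mul_apply] using hval
  · push_neg at hs
    have hne : Equiv.swap i j p.1 ≠ Equiv.swap i j p.2 :=
      fun h => absurd ((Equiv.swap i j).injective h) (ne_of_lt h12)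
    have hs' : Equiv.swap i j p.2 < Equiv.swap i j p.1 := lt_of_le_of_ne hs (Ne.symm hne)
    rw [mem_invSet]
    refine ⟨h12, ?_⟩
    simp only [Equiv.Perm.mul_apply]
    by_cases e1i : p.1 = i
    · by_cases e2j : p.2 = j
      · subst e1i; subst e2j
        simpa using hv
      · have e2i : p.2 ≠ i := fun h => absurd (h ▸ h12) (by subst e1i; exact lt_irrefl _)
        subst e1i
        rw [Equiv.swap_apply_left, Equiv.swap_apply_of_ne_of_ne e2i e2j]
        exact lt_trans hval hv
    · by_cases e1j : p.1 = j
      · exfalso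
        have h2i : p.2 ≠ i := fun h => absurd (h ▸ h12) (by subst e1j; exact fun hh => absurd (lt_trans hij hh) (lt_irrefl _))
        have h2j : p.2 ≠ j := fun h => absurd (h ▸ h12) (by subst e1j; exact lt_irrefl _)
        rw [e1j, Equiv.swap_apply_right, Equiv.swap_apply_of_ne_of_ne h2i h2j] at hs'
        exact absurd (lt_trans (lt_trans hs' hij) (e1j ▸ h12)) (lt_irrefl _)
      · rw [Equiv.swap_apply_of_ne_of_ne e1i e1j] at hs' ⊢
        by_cases e2i : p.2 = i
        · exfalso
          rw [e2i, Equiv.swap_apply_left] at hs'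
          exact absurd (lt_trans (e2i ▸ h12) (lt_trans hij hs')) (lt_irrefl _)
        · by_cases e2j : p.2 = j
          · rw [e2j, Equiv.swap_apply_right]
            have : π j < π p.1 := e2j ▸ hval
            exact lt_trans hv this
          · exfalso
            rw [Equiv.swap_apply_of_ne_of_ne e2i e2j] at hs'
            exact absurd (lt_trans h12 hs') (lt_irrefl _)

lemma Fmap_injOn {π : Equiv.Perm (Fin n)} (i j : Fin n) :
    Set.InjOn (Fmap i j) (invSet π : Set (Fin n × Fin n)) := by
  intro p hp q hq hpq
  rw [Finset.mem_coe, mem_invSet] at hp hq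
  unfold Fmap at hpq
  split_ifs at hpq with h1 h2 h2
  · have := congrArg Prod.fst hpq
    have := congrArg Prod.snd hpq
    exact Prod.ext ((Equiv.swap i j).injective (by simpa using congrArg Prod.fst hpq))
      ((Equiv.swap i j).injective (by simpa using congrArg Prod.snd hpq))
  · -- q = (swap p.1, swap p.2), ¬ swap q.1 < swap q.2
    exfalso
    apply h2
    rw [← hpq]
    simpa using hp.1
  · exfalso
    apply h1
    rw [hpq]
    simpa using hq.1
  · exact hpq

lemma Fmap_ne_pair {π : Equiv.Perm (Fin n)} {i j a b : Fin n}
    (hab : ¬ Equiv.swap i j a < Equiv.swap i j b) (hval : ¬ π b < π a)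
    {p : Fin n × Fin n} (hp : p ∈ invSet π) : Fmap i j p ≠ (a, b) := by
  rw [mem_invSet] at hp
  intro he
  unfold Fmap at he
  split_ifs at he with hs
  · have h1 : p.1 = Equiv.swap i j a := (Equiv.swap i j).injective (by
      have := congrArg Prod.fst he; simpa using this)
    have h2 : p.2 = Equiv.swap i j b := (Equiv.swap i j).injective (by
      have := congrArg Prod.snd he; simpa using this)
    exact hab (by rw [← h1, ← h2]; simpa using hp.1)
  · exact hval (by rw [he] at hp; exact hp.2)

lemma key1 (π : Equiv.Perm (Fin n)) (i j : Fin n) (hij : i < j) (hv : π i < π j) :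
    invNum π + 1 ≤ invNum (π * Equiv.swap i j) := by
  classical
  set σ := π * Equiv.swap i j with hσ
  have hmem : (i, j) ∈ invSet σ := by
    rw [mem_invSet]
    refine ⟨hij, ?_⟩
    simpa [hσ, Equiv.Perm.mul_apply] using hv
  have hsub : insert (i, j) ((invSet π).image (Fmap i j)) ⊆ invSet σ := by
    intro e he
    rcases Finset.mem_insert.1 he with rfl | he
    · exact hmem
    · obtain ⟨p, hp, rfl⟩ := Finset.mem_image.1 he
      exact Fmap_mem hij hv hp
  have hni : (i, j) ∉ (invSet π).image (Fmap i j) := by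
    intro he
    obtain ⟨p, hp, hfp⟩ := Finset.mem_image.1 he
    exact Fmap_ne_pair (by simp [hij.not_gt]) (by simp [hv.not_gt]) hp hfp
  calc invNum π + 1 = ((invSet π).image (Fmap i j)).card + 1 := by
        rw [invNum_eq, Finset.card_image_of_injOn (Fmap_injOn i j)]
    _ = (insert (i, j) ((invSet π).image (Fmap i j))).card := (Finset.card_insert_of_notMem hni).symm
    _ ≤ (invSet σ).card := Finset.card_le_card hsub
    _ = invNum σ := (invNum_eq σ).symm

lemma key3 (π : Equiv.Perm (Fin n)) (i j k : Fin n) (hik : i < k) (hkj : k < j)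
    (hv1 : π i < π k) (hv2 : π k < π j) :
    invNum π + 3 ≤ invNum (π * Equiv.swap i j) := by
  classical
  have hij : i < j := hik.trans hkj
  have hv : π i < π j := hv1.trans hv2
  set σ := π * Equiv.swap i j with hσ
  have hki : k ≠ i := ne_of_gt hik
  have hkj' : k ≠ j := ne_of_lt hkj
  have hσk : σ k = π k := by
    simp [hσ, Equiv.Perm.mul_apply, Equiv.swap_apply_of_ne_of_ne hki hkj']
  have hσi : σ i = π j := by simp [hσ, Equiv.Perm.mul_apply]
  have hσj : σ j = π i := by simp [hσ, Equiv.Perm.mul_apply]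
  have hm1 : (i, j) ∈ invSet σ := by
    rw [mem_invSet]; exact ⟨hij, by rw [hσi, hσj]; exact hv⟩
  have hm2 : (i, k) ∈ invSet σ := by
    rw [mem_invSet]; exact ⟨hik, by rw [hσi, hσk]; exact hv2⟩
  have hm3 : (k, j) ∈ invSet σ := by
    rw [mem_invSet]; exact ⟨hkj, by rw [hσk, hσj]; exact hv1⟩
  set T := (invSet π).image (Fmap i j) with hT
  have hn1 : (i, j) ∉ T := by
    intro he; obtain ⟨p, hp, hfp⟩ := Finset.mem_image.1 he
    exact Fmap_ne_pair (by simp [hij.not_gt]) (by simp [hv.not_gt]) hp hfp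
  have hn2 : (i, k) ∉ T := by
    intro he; obtain ⟨p, hp, hfp⟩ := Finset.mem_image.1 he
    exact Fmap_ne_pair (by
      simp [Equiv.swap_apply_of_ne_of_ne hki hkj', hkj.not_gt]) (by simp [hv1.not_gt]) hp hfp
  have hn3 : (k, j) ∉ T := by
    intro he; obtain ⟨p, hp, hfp⟩ := Finset.mem_image.1 he
    exact Fmap_ne_pair (by
      simp [Equiv.swap_apply_of_ne_of_ne hki hkj', hik.not_gt]) (by simp [hv2.not_gt]) hp hfp
  have hsub : insert (i, j) (insert (i, k) (insert (k, j) T)) ⊆ invSet σ := by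
    intro e he
    simp only [Finset.mem_insert] at he
    rcases he with rfl | rfl | rfl | he
    · exact hm1
    · exact hm2
    · exact hm3
    · obtain ⟨p, hp, rfl⟩ := Finset.mem_image.1 he
      exact Fmap_mem hij hv hp
  have hd1 : (i, j) ∉ insert (i, k) (insert (k, j) T) := by
    simp only [Finset.mem_insert]
    push_neg
    exact ⟨fun h => hkj' (congrArg Prod.snd h).symm, fun h => hki (congrArg Prod.fst h).symm, hn1⟩
  have hd2 : (i, k) ∉ insert (k, j) T := by
    simp only [Finset.mem_insert]
    push_neg
    exact ⟨fun h => hki (congrArg Prod.fst h).symm, hn2⟩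
  calc invNum π + 3 = T.card + 3 := by rw [invNum_eq, hT, Finset.card_image_of_injOn (Fmap_injOn i j)]
    _ = (insert (i, j) (insert (i, k) (insert (k, j) T))).card := by
        rw [Finset.card_insert_of_notMem hd1, Finset.card_insert_of_notMem hd2,
          Finset.card_insert_of_notMem hn3]
    _ ≤ (invSet σ).card := Finset.card_le_card hsub
    _ = invNum σ := (invNum_eq σ).symm

lemma down_char (π : Equiv.Perm (Fin n)) {x y : Fin n} (hxy : x < y)
    (h : invNum (Equiv.swap x y * π) + 1 = invNum π) :
    π⁻¹ y < π⁻¹ x ∧ ∀ c, x < c → c < y → ¬(π⁻¹ y < π⁻¹ c ∧ π⁻¹ c < π⁻¹ x) := by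
  have hswap : Equiv.swap x y * π = π * Equiv.swap (π⁻¹ x) (π⁻¹ y) := by
    have := swap_mul_eq π (π⁻¹ x) (π⁻¹ y)
    rwa [Equiv.Perm.apply_inv_self, Equiv.Perm.apply_inv_self] at this
  constructor
  · by_contra hc
    push_neg at hc
    have hne : π⁻¹ x ≠ π⁻¹ y := fun hh => absurd (π⁻¹.injective hh ▸ hxy) (lt_irrefl _)
    have hlt : π⁻¹ x < π⁻¹ y := lt_of_le_of_ne hc hne
    have hk := key1 π (π⁻¹ x) (π⁻¹ y) hlt
      (by rw [Equiv.Perm.apply_inv_self, Equiv.Perm.apply_inv_self]; exact hxy)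
    rw [← hswap] at hk
    omega
  · rintro c hxc hcy ⟨h1, h2⟩
    set σ := Equiv.swap x y * π with hσ
    have hcx : c ≠ x := ne_of_gt hxc
    have hcy' : c ≠ y := ne_of_lt hcy
    have hσy : σ (π⁻¹ y) = x := by
      simp [hσ, Equiv.Perm.mul_apply, Equiv.Perm.apply_inv_self, Equiv.swap_apply_right]
    have hσx : σ (π⁻¹ x) = y := by
      simp [hσ, Equiv.Perm.mul_apply, Equiv.Perm.apply_inv_self]
    have hσc : σ (π⁻¹ c) = c := by
      simp [hσ, Equiv.Perm.mul_apply, Equiv.Perm.apply_inv_self,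
        Equiv.swap_apply_of_ne_of_ne hcx hcy']
    have hback : σ * Equiv.swap (π⁻¹ y) (π⁻¹ x) = π := by
      rw [hswap, Equiv.swap_comm (π⁻¹ y) (π⁻¹ x), mul_assoc]
      simp
    have hk := key3 σ (π⁻¹ y) (π⁻¹ x) (π⁻¹ c) h1 h2
      (by rw [hσy, hσc]; exact hxc) (by rw [hσc, hσx]; exact hcy)
    rw [hback] at hk
    omega

def dGraph (π : Equiv.Perm (Fin n)) : SimpleGraph (Fin n) where
  Adj x y := (x < y ∧ invNum (Equiv.swap x y * π) + 1 = invNum π) ∨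
    (y < x ∧ invNum (Equiv.swap y x * π) + 1 = invNum π)
  symm := ⟨by intro x y hh; tauto⟩
  loopless := ⟨by intro x hh; rcases hh with ⟨hh, _⟩ | ⟨hh, _⟩ <;> exact absurd hh (lt_irrefl _)⟩

instance dGraphDec (π : Equiv.Perm (Fin n)) : DecidableRel (dGraph π).Adj := fun _ _ => by
  unfold dGraph; simp only; infer_instance

lemma dGraph_adj {π : Equiv.Perm (Fin n)} {x y : Fin n} (hxy : x < y) :
    (dGraph π).Adj x y ↔ invNum (Equiv.swap x y * π) + 1 = invNum π := by
  constructor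
  · rintro (⟨_, hh⟩ | ⟨hh, _⟩)
    · exact hh
    · exact absurd (hh.trans hxy) (lt_irrefl _)
  · intro hh; exact Or.inl ⟨hxy, hh⟩

/-- Down-edge characterization used everywhere: if x<y adjacent, positions reversed and
no value strictly between with position strictly between. -/
lemma dGraph_char {π : Equiv.Perm (Fin n)} {x y : Fin n} (hxy : x < y)
    (h : (dGraph π).Adj x y) :
    π⁻¹ y < π⁻¹ x ∧ ∀ c, x < c → c < y → ¬(π⁻¹ y < π⁻¹ c ∧ π⁻¹ c < π⁻¹ x) :=
  down_char π hxy ((dGraph_adj hxy).1 h)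

/-- Count edges of any graph on `Fin n` by ordered pairs. -/
lemma card_edge_ordered (G : SimpleGraph (Fin n)) [DecidableRel G.Adj] :
    (Finset.univ.filter fun p : Fin n × Fin n => p.1 < p.2 ∧ G.Adj p.1 p.2).card
      = G.edgeFinset.card := by
  apply Finset.card_bij (fun p _ => s(p.1, p.2))
  · intro p hp
    simp only [Finset.mem_filter] at hp
    rw [SimpleGraph.mem_edgeFinset, SimpleGraph.mem_edgeSet]
    exact hp.2.2
  · intro p hp q hq he
    simp only [Finset.mem_filter] at hp hq
    rcases Sym2.eq_iff.1 he with ⟨h1, h2⟩ | ⟨h1, h2⟩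
    · exact Prod.ext h1 h2
    · exfalso
      have h3 : q.2 < q.1 := by rw [← h1, ← h2]; exact hp.2.1
      exact absurd (h3.trans hq.2.1) (lt_irrefl _)
  · intro e he
    induction e with
    | _ x y =>
      rw [SimpleGraph.mem_edgeFinset, SimpleGraph.mem_edgeSet] at he
      rcases lt_trichotomy x y with hl | hl | hl
      · exact ⟨(x, y), Finset.mem_filter.2 ⟨Finset.mem_univ _, hl, he⟩, rfl⟩
      · exact absurd hl (G.ne_of_adj he)
      · exact ⟨(y, x), Finset.mem_filter.2 ⟨Finset.mem_univ _, hl, he.symm⟩, Sym2.eq_swap⟩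

lemma downDeg_eq_card (π : Equiv.Perm (Fin n)) : downDeg π = (dGraph π).edgeFinset.card := by
  rw [downDeg, ← card_edge_ordered]
  congr 1
  apply Finset.filter_congr
  intro p _
  simp only [and_congr_right_iff]
  intro hp
  rw [dGraph_adj hp]

lemma dGraph_cliqueFree (π : Equiv.Perm (Fin n)) : (dGraph π).CliqueFree 3 := by
  intro s hs
  rw [SimpleGraph.is3Clique_iff] at hs
  obtain ⟨a, b, c, hab, hac, hbc, -⟩ := hs
  -- helper for ordered triples
  have key : ∀ u v w : Fin n, u < v → v < w → (dGraph π).Adj u v → (dGraph π).Adj v w →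
      (dGraph π).Adj u w → False := by
    intro u v w huv hvw h1 h2 h3
    have c1 := dGraph_char huv h1
    have c2 := dGraph_char hvw h2
    have c3 := dGraph_char (huv.trans hvw) h3
    exact c3.2 v huv hvw ⟨c2.1, c1.1⟩
  rcases lt_trichotomy a b with h1 | h1 | h1
  · rcases lt_trichotomy b c with h2 | h2 | h2
    · exact key a b c h1 h2 hab hbc hac
    · exact absurd (h2 ▸ hbc) ((dGraph π).loopless.irrefl _)
    · rcases lt_trichotomy a c with h3 | h3 | h3
      · exact key a c b h3 h2 hac hbc.symm hab
      · exact absurd (h3 ▸ hac) ((dGraph π).loopless.irrefl _)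
      · exact key c a b h3 h1 hac.symm hab hbc.symm
  · exact absurd (h1 ▸ hab) ((dGraph π).loopless.irrefl _)
  · rcases lt_trichotomy a c with h2 | h2 | h2
    · exact key b a c h1 h2 hab.symm hac hbc
    · exact absurd (h2 ▸ hac) ((dGraph π).loopless.irrefl _)
    · rcases lt_trichotomy b c with h3 | h3 | h3
      · exact key b c a h3 h2 hbc hac.symm hab.symm
      · exact absurd (h3 ▸ hbc) ((dGraph π).loopless.irrefl _)
      · exact key c b a h3 h1 hbc.symm hab.symm hac.symm

lemma turan_edges_le (n : ℕ) : (SimpleGraph.turanGraph n 2).edgeFinset.card ≤ n ^ 2 / 4 := by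
  classical
  rw [← card_edge_ordered]
  set E := (Finset.univ.filter fun x : Fin n => (x : ℕ) % 2 = 0) with hE
  set O := (Finset.univ.filter fun x : Fin n => ¬ (x : ℕ) % 2 = 0) with hO
  have hcard : (Finset.univ.filter fun p : Fin n × Fin n =>
      p.1 < p.2 ∧ (SimpleGraph.turanGraph n 2).Adj p.1 p.2).card ≤ (E ×ˢ O).card := by
    refine Finset.card_le_card_of_injOn
      (fun p : Fin n × Fin n => if (p.1 : ℕ) % 2 = 0 then p else (p.2, p.1)) ?_ ?_
    · intro p hp
      simp only [Finset.mem_coe, Finset.mem_filter] at hp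
      have hadj : (p.1 : ℕ) % 2 ≠ (p.2 : ℕ) % 2 := hp.2.2
      rw [Finset.mem_coe, Finset.mem_product]
      simp only
      split_ifs with h1
      · refine ⟨Finset.mem_filter.2 ⟨Finset.mem_univ _, h1⟩,
          Finset.mem_filter.2 ⟨Finset.mem_univ _, fun hh => hadj (h1.trans hh.symm)⟩⟩
      · refine ⟨Finset.mem_filter.2 ⟨Finset.mem_univ _, ?_⟩,
          Finset.mem_filter.2 ⟨Finset.mem_univ _, h1⟩⟩
        show ((p.2 : ℕ)) % 2 = 0
        omega
    · intro p hp q hq he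
      simp only [Finset.mem_coe, Finset.mem_filter] at hp hq
      simp only at he
      split_ifs at he with h1 h2 h2
      · exact he
      · exfalso
        have e1 : p.1 = q.2 := congrArg Prod.fst he
        have e2 : p.2 = q.1 := congrArg Prod.snd he
        exact absurd ((e1 ▸ e2 ▸ hp.2.1 : q.2 < q.1).trans hq.2.1) (lt_irrefl _)
      · exfalso
        have e1 : p.2 = q.1 := congrArg Prod.fst he
        have e2 : p.1 = q.2 := congrArg Prod.snd he
        exact absurd ((e2 ▸ e1 ▸ hp.2.1 : q.2 < q.1).trans hq.2.1) (lt_irrefl _)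
      · have e1 : p.2 = q.2 := congrArg Prod.fst he
        have e2 : p.1 = q.1 := congrArg Prod.snd he
        exact Prod.ext e2 e1
  have hsum : E.card + O.card = n := by
    rw [hE, hO, Finset.card_filter_add_card_filter_not, Finset.card_univ, Fintype.card_fin]
  rw [Finset.card_product] at hcard
  refine hcard.trans ?_
  rw [Nat.le_div_iff_mul_le (by norm_num)]
  nlinarith [hsum, sq_nonneg (E.card - O.card : ℤ)]


theorem no_decreasing_four_of_max_downDeg {n : ℕ} (π : Equiv.Perm (Fin n))
    (h : downDeg π = n ^ 2 / 4) :
    ¬ ∃ i₁ i₂ i₃ i₄ : Fin n, i₁ < i₂ ∧ i₂ < i₃ ∧ i₃ < i₄ ∧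
      π i₂ < π i₁ ∧ π i₃ < π i₂ ∧ π i₄ < π i₃ := by

  rintro ⟨i1, i2, i3, i4, h12, h23, h34, hv21, hv32, hv43⟩
  classical
  have hn : 4 ≤ n := by
    have l1 : (i1 : ℕ) < i2 := h12
    have l2 : (i2 : ℕ) < i3 := h23
    have l3 : (i3 : ℕ) < i4 := h34
    have l4 := i4.isLt
    omega
  set G := dGraph π with hG
  have hedge : G.edgeFinset.card = n ^ 2 / 4 := by
    rw [← downDeg_eq_card]; exact h
  have htm : G.IsTuranMaximal 2 := by
    refine ⟨dGraph_cliqueFree π, fun H _ hH => ?_⟩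
    calc H.edgeFinset.card ≤ (SimpleGraph.turanGraph n 2).edgeFinset.card :=
          (SimpleGraph.isTuranMaximal_turanGraph (by norm_num : 0 < 2)).2 hH
      _ ≤ n ^ 2 / 4 := turan_edges_le n
      _ = G.edgeFinset.card := hedge.symm
  obtain ⟨f⟩ := htm.nonempty_iso_turanGraph
  set m := Fintype.card (Fin n) with hmdef
  have hm : m = n := Fintype.card_fin n
  set g : Fin n → ℕ := fun x => ((f x : Fin m) : ℕ) % 2 with hg
  have hAdj : ∀ x y : Fin n, G.Adj x y ↔ g x ≠ g y := by
    intro x y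
    rw [← f.map_adj_iff]
    exact Iff.rfl
  -- the four values
  set a1 := π i1
  set a2 := π i2
  set a3 := π i3
  set a4 := π i4
  have p1 : π⁻¹ a1 = i1 := Equiv.Perm.inv_apply_self π i1
  have p2 : π⁻¹ a2 = i2 := Equiv.Perm.inv_apply_self π i2
  have p3 : π⁻¹ a3 = i3 := Equiv.Perm.inv_apply_self π i3
  have p4 : π⁻¹ a4 = i4 := Equiv.Perm.inv_apply_self π i4
  have h42 : a4 < a2 := hv43.trans hv32
  have h41 : a4 < a1 := h42.trans hv21
  have h31 : a3 < a1 := hv32.trans hv21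
  -- non-adjacencies
  have nadj1 : ¬ G.Adj a4 a2 := fun hadj =>
    (dGraph_char h42 hadj).2 a3 hv43 hv32 ⟨by rw [p2, p3]; exact h23, by rw [p3, p4]; exact h34⟩
  have nadj2 : ¬ G.Adj a4 a1 := fun hadj =>
    (dGraph_char h41 hadj).2 a3 hv43 h31 ⟨by rw [p1, p3]; exact h12.trans h23, by rw [p3, p4]; exact h34⟩
  have nadj3 : ¬ G.Adj a3 a1 := fun hadj =>
    (dGraph_char h31 hadj).2 a2 hv32 hv21 ⟨by rw [p1, p2]; exact h12, by rw [p2, p3]; exact h23⟩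
  have g42 : g a4 = g a2 := not_not.1 fun hne => nadj1 ((hAdj _ _).2 hne)
  have g41 : g a4 = g a1 := not_not.1 fun hne => nadj2 ((hAdj _ _).2 hne)
  have g31 : g a3 = g a1 := not_not.1 fun hne => nadj3 ((hAdj _ _).2 hne)
  -- find a vertex of opposite parity
  have hm2 : 2 ≤ m := by omega
  have hglt : ∀ x, g x < 2 := fun x => Nat.mod_lt _ (by norm_num)
  set w : Fin m := if g a1 = 0 then ⟨1, by omega⟩ else ⟨0, by omega⟩ with hw
  set v : Fin n := f.symm w with hv
  have hgv : g v = (w : ℕ) % 2 := by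
    rw [hg]
    simp only [hv]
    rw [RelIso.apply_symm_apply]
  have hgva1 : g v ≠ g a1 := by
    rw [hgv, hw]
    split_ifs with h0
    · rw [h0]; norm_num
    · have := hglt a1
      simp only [Fin.val_mk]
      omega
  have hgva2 : g v ≠ g a2 := by rw [← g42, g41]; exact hgva1
  have hgva3 : g v ≠ g a3 := by rw [g31]; exact hgva1
  have adj1 : G.Adj v a1 := (hAdj _ _).2 hgva1
  have adj2 : G.Adj v a2 := (hAdj _ _).2 hgva2
  have adj3 : G.Adj v a3 := (hAdj _ _).2 hgva3
  rcases lt_trichotomy v a3 with hc | hc | hc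
  · -- v < a3 : use pair (v, a2) with intermediate a3
    have c3 := dGraph_char hc adj3
    have c2 := dGraph_char (hc.trans hv32) adj2
    exact c2.2 a3 hc hv32 ⟨by rw [p2, p3]; exact h23, c3.1⟩
  · exact hgva3 (by rw [hc])
  · rcases lt_trichotomy v a2 with hd | hd | hd
    · -- a3 < v < a2 : use pair (v, a1) with intermediate a2
      have c2 := dGraph_char hd adj2
      have c1 := dGraph_char (hd.trans hv21) adj1
      exact c1.2 a2 hd hv21 ⟨by rw [p1, p2]; exact h12, c2.1⟩
    · exact hgva2 (by rw [hd])
    · -- a2 < v : use pair (a3, v) with intermediate a2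
      have c2 := dGraph_char hd adj2.symm
      have c3 := dGraph_char hc adj3.symm
      exact c3.2 a2 hv32 hd ⟨c2.1, by rw [p2, p3]; exact h23⟩
end
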